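/- Let g : ℝⁿ → ℝⁿ be continuous and consider the discrete-time system x⁺ = g(x). Suppose: (i) Mₑ ⊆ ℝⁿ is closed and forward invariant (g(Mₑ) ⊆ Mₑ); (ii) Mᵢ ⊆ Mₑ is closed, stable relative to Mₑ, and globally attractive relative to Mₑ; (iii) M∘ ⊆ Mᵢ is compact, stable relative to Mᵢ, and globally attractive relative to Mᵢ; (iv) for every compact K ⊆ Mₑ there exists Δ > 0 such that ‖g^[n](x)‖ < Δ for all x ∈ K and all n ∈ ℕ. Then there exists a class-KL function β : [0,∞) × ℕ → [0,∞) — i.e. for each fixed n, s ↦ β(s, n) is continuous, strictly increasing, and β(0, n) = 0, and for each fixed s, n ↦ β(s, n) is nonincreasing with β(s, n) → 0 as n → ∞ — such that dist(g^[n](x), M∘) ≤ β(dist(x, M∘), n) for all x ∈ Mₑ and all n ∈ ℕ. -/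

import Mathlib

open Metric Filter Topology

/-- `X` is stable relative to `Y` for the discrete-time system `x⁺ = g x`. -/
def StableRel {d : ℕ} (g : EuclideanSpace ℝ (Fin d) → EuclideanSpace ℝ (Fin d))
    (Y X : Set (EuclideanSpace ℝ (Fin d))) : Prop :=
  ∀ ε > (0 : ℝ), ∀ Δ > (0 : ℝ), ∃ δ > (0 : ℝ), ∀ x ∈ Y,
    infDist x X < δ → ‖x‖ < Δ → ∀ n : ℕ, infDist (g^[n] x) X < ε

/-- `X` is globally attractive relative to `Y` for the discrete-time system `x⁺ = g x`. -/
def GloballyAttractiveRel {d : ℕ}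
    (g : EuclideanSpace ℝ (Fin d) → EuclideanSpace ℝ (Fin d))
    (Y X : Set (EuclideanSpace ℝ (Fin d))) : Prop :=
  ∀ x ∈ Y, Tendsto (fun n : ℕ => infDist (g^[n] x) X) atTop (𝓝 0)

section Aux
variable {d : ℕ} {g : EuclideanSpace ℝ (Fin d) → EuclideanSpace ℝ (Fin d)}
  {Me Mi Mo : Set (EuclideanSpace ℝ (Fin d))}

lemma HKL.iter_mem (hMeInv : g '' Me ⊆ Me) {x} (hx : x ∈ Me) (n : ℕ) : g^[n] x ∈ Me := by
  induction n with
  | zero => simpa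
  | succ n ih => rw [Function.iterate_succ_apply']; exact hMeInv ⟨_, ih, rfl⟩

/-- A closed stable set is forward invariant. -/
lemma HKL.iter_mem_stable (hsub : Mi ⊆ Me) (hcl : IsClosed Mi) (hst : StableRel g Me Mi)
    {x} (hx : x ∈ Mi) (n : ℕ) : g^[n] x ∈ Mi := by
  rw [hcl.mem_iff_infDist_zero ⟨x, hx⟩]
  refine le_antisymm (le_of_forall_pos_le_add fun ε hε => ?_) infDist_nonneg
  obtain ⟨δ, hδpos, hprop⟩ := hst ε hε (‖x‖ + 1) (by positivity)
  have h := hprop x (hsub hx) (by simpa [infDist_zero_of_mem hx]) (by linarith) n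
  linarith

lemma HKL.clusterPt_mem_closed {X : Type*} [TopologicalSpace X] {F : Filter X} {y : X}
    (h : ClusterPt y F) {S : Set X} (hS : IsClosed S) (hFS : S ∈ F) : y ∈ S := by
  have : ClusterPt y (𝓟 S) := h.mono (le_principal_iff.2 hFS)
  rwa [← mem_closure_iff_clusterPt, hS.closure_eq] at this

/-- Core lemma: a point of `Mi` admitting a bounded backward orbit inside `Mi` lies in `Mo`. -/
lemma HKL.backOrbit (hg : Continuous g)
    (hMiSub : Mi ⊆ Me) (hMiClosed : IsClosed Mi) (hMiStable : StableRel g Me Mi)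
    (hMoSub : Mo ⊆ Mi) (hMoClosed : IsClosed Mo) (hMone : Mo.Nonempty)
    (hMoStable : StableRel g Mi Mo) (hMoAttr : GloballyAttractiveRel g Mi Mo)
    (hUGB : ∀ K : Set (EuclideanSpace ℝ (Fin d)), IsCompact K → K ⊆ Me →
      ∃ Δ > (0 : ℝ), ∀ x ∈ K, ∀ n : ℕ, ‖g^[n] x‖ < Δ)
    (R : ℝ) (y : ℕ → EuclideanSpace ℝ (Fin d))
    (hyc : ∀ m, g (y (m + 1)) = y m) (hyMi : ∀ m, y m ∈ Mi) (hyR : ∀ m, ‖y m‖ ≤ R) :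
    y 0 ∈ Mo := by
  set K : Set (EuclideanSpace ℝ (Fin d)) := Mi ∩ closedBall 0 R with hK
  have hKc : IsCompact K :=
    (isCompact_closedBall (0:EuclideanSpace ℝ (Fin d)) R).of_isClosed_subset
      (hMiClosed.inter isClosed_closedBall) Set.inter_subset_right
  obtain ⟨Δ, hΔpos, hΔ⟩ := hUGB K hKc (Set.inter_subset_left.trans hMiSub)
  have hyK : ∀ m, y m ∈ K := fun m => ⟨hyMi m, by simpa [mem_closedBall_zero_iff] using hyR m⟩
  obtain ⟨w, hwK, φ, hφ, hconv⟩ := hKc.tendsto_subseq hyK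
  have hiter : ∀ j, g^[j] (y j) = y 0 := by
    intro j
    induction j with
    | zero => rfl
    | succ j ih => rw [Function.iterate_succ_apply, hyc j, ih]
  rw [hMoClosed.mem_iff_infDist_zero hMone]
  refine le_antisymm (le_of_forall_pos_le_add fun ε hε => ?_) infDist_nonneg
  obtain ⟨δ, hδpos, hδ⟩ := hMoStable ε hε Δ hΔpos
  -- find a time m₀ where the trajectory of w is δ-close to Mo
  obtain ⟨m₀, hm₀⟩ := ((hMoAttr w hwK.1).eventually (gt_mem_nhds hδpos)).exists
  have hUopen : IsOpen {z : EuclideanSpace ℝ (Fin d) | infDist (g^[m₀] z) Mo < δ} :=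
    isOpen_lt ((continuous_infDist_pt Mo).comp (hg.iterate m₀)) continuous_const
  have hwU : w ∈ {z | infDist (g^[m₀] z) Mo < δ} := hm₀
  obtain ⟨i, hiU, him⟩ := ((hconv.eventually (hUopen.mem_nhds hwU)).and
    (eventually_ge_atTop m₀)).exists
  set j := φ i with hj
  have hjm : m₀ ≤ j := him.trans (hφ.le_apply)
  have huMi : g^[m₀] (y j) ∈ Mi := HKL.iter_mem_stable hMiSub hMiClosed hMiStable (hyMi j) m₀
  have hunorm : ‖g^[m₀] (y j)‖ < Δ := hΔ (y j) (hyK j) m₀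
  have hu : infDist (g^[j - m₀] (g^[m₀] (y j))) Mo < ε := hδ _ huMi hiU hunorm _
  rw [← Function.iterate_add_apply, Nat.sub_add_cancel hjm, hiter j] at hu
  linarith

/-- Global attractivity of `Mo` relative to `Me`. -/
lemma HKL.attr_Me (hg : Continuous g)
    (hMeClosed : IsClosed Me) (hMeInv : g '' Me ⊆ Me)
    (hMiSub : Mi ⊆ Me) (hMiClosed : IsClosed Mi)
    (hMiStable : StableRel g Me Mi) (hMiAttr : GloballyAttractiveRel g Me Mi)
    (hMoSub : Mo ⊆ Mi) (hMoClosed : IsClosed Mo) (hMone : Mo.Nonempty)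
    (hMoStable : StableRel g Mi Mo) (hMoAttr : GloballyAttractiveRel g Mi Mo)
    (hUGB : ∀ K : Set (EuclideanSpace ℝ (Fin d)), IsCompact K → K ⊆ Me →
      ∃ Δ > (0 : ℝ), ∀ x ∈ K, ∀ n : ℕ, ‖g^[n] x‖ < Δ)
    {x} (hx : x ∈ Me) :
    Tendsto (fun n : ℕ => infDist (g^[n] x) Mo) atTop (𝓝 0) := by
  by_contra hcon
  rw [Metric.tendsto_atTop] at hcon
  push_neg at hcon
  obtain ⟨ε₀, hε₀, hfreq⟩ := hcon
  have hfreq' : ∃ᶠ n in atTop, ε₀ ≤ infDist (g^[n] x) Mo := by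
    rw [frequently_atTop]
    intro N
    obtain ⟨n, hn, hd⟩ := hfreq N
    refine ⟨n, hn, ?_⟩
    rw [Real.dist_eq, abs_of_nonneg (by linarith [@infDist_nonneg _ _ Mo (g^[n] x)])] at hd
    linarith
  obtain ⟨φ, hφ, hφprop⟩ := extraction_of_frequently_atTop hfreq'
  obtain ⟨Δ, hΔpos, hΔ⟩ := hUGB {x} isCompact_singleton (by simpa)
  set C : Set (EuclideanSpace ℝ (Fin d)) := Me ∩ closedBall 0 Δ with hC
  have hCc : IsCompact C :=
    (isCompact_closedBall (0:EuclideanSpace ℝ (Fin d)) Δ).of_isClosed_subset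
      (hMeClosed.inter isClosed_closedBall) Set.inter_subset_right
  set ξ : ℕ → ℕ → EuclideanSpace ℝ (Fin d) := fun k m => g^[φ k - m] x with hξ
  have hξC : ∀ k m, ξ k m ∈ C := fun k m =>
    ⟨HKL.iter_mem hMeInv hx _, by
      simpa [mem_closedBall_zero_iff] using (hΔ x rfl (φ k - m)).le⟩
  have hSc : IsCompact (Set.univ.pi fun _ : ℕ => C) := isCompact_univ_pi fun _ => hCc
  have hle : Filter.map ξ atTop ≤ 𝓟 (Set.univ.pi fun _ : ℕ => C) := by
    rw [le_principal_iff, mem_map]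
    filter_upwards with k
    exact fun m _ => hξC k m
  obtain ⟨y, hyS, hy⟩ := hSc.exists_clusterPt hle
  -- backward-orbit relations
  have hyc : ∀ m, g (y (m + 1)) = y m := by
    intro m
    have hcl : IsClosed {f : ℕ → EuclideanSpace ℝ (Fin d) | g (f (m+1)) = f m} :=
      isClosed_eq (hg.comp (continuous_apply (m+1))) (continuous_apply m)
    refine HKL.clusterPt_mem_closed hy hcl ?_
    rw [mem_map]
    filter_upwards [eventually_ge_atTop (m+1)] with k hk
    have hk' : m + 1 ≤ φ k := hk.trans hφ.le_apply
    show g (g^[φ k - (m+1)] x) = g^[φ k - m] x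
    rw [← Function.iterate_succ_apply' g]
    congr 1
    omega
  have hyMi : ∀ m, y m ∈ Mi := by
    intro m
    rw [hMiClosed.mem_iff_infDist_zero ⟨_, hMoSub hMone.choose_spec⟩]
    refine le_antisymm (le_of_forall_pos_le_add fun η hη => ?_) infDist_nonneg
    have hcl : IsClosed {f : ℕ → EuclideanSpace ℝ (Fin d) | infDist (f m) Mi ≤ η} :=
      isClosed_le ((continuous_infDist_pt Mi).comp (continuous_apply m)) continuous_const
    have hmem : y ∈ {f : ℕ → EuclideanSpace ℝ (Fin d) | infDist (f m) Mi ≤ η} := by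
      refine HKL.clusterPt_mem_closed hy hcl ?_
      rw [mem_map]
      obtain ⟨J, hJ⟩ := (Metric.tendsto_atTop.1 (hMiAttr x hx)) η hη
      filter_upwards [eventually_ge_atTop (J + m)] with k hk
      have hk' : J + m ≤ φ k := hk.trans hφ.le_apply
      have := hJ (φ k - m) (by omega)
      rw [Real.dist_eq, sub_zero] at this
      exact (le_abs_self _).trans this.le
    simpa using hmem
  have hy0 : ε₀ ≤ infDist (y 0) Mo := by
    have hcl : IsClosed {f : ℕ → EuclideanSpace ℝ (Fin d) | ε₀ ≤ infDist (f 0) Mo} :=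
      isClosed_le continuous_const ((continuous_infDist_pt Mo).comp (continuous_apply 0))
    refine HKL.clusterPt_mem_closed hy hcl ?_
    rw [mem_map]
    filter_upwards with k
    simpa [hξ] using hφprop k
  have hyR : ∀ m, ‖y m‖ ≤ Δ := by
    intro m
    have := hyS m (Set.mem_univ m)
    simpa [mem_closedBall_zero_iff] using this.2
  have : y 0 ∈ Mo := HKL.backOrbit hg hMiSub hMiClosed hMiStable hMoSub hMoClosed hMone
    hMoStable hMoAttr hUGB Δ y hyc hyMi hyR
  have : infDist (y 0) Mo = 0 := infDist_zero_of_mem this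
  linarith

/-- Stability of `Mo` relative to `Me`. -/
lemma HKL.stab_Me (hg : Continuous g)
    (hMeClosed : IsClosed Me) (hMeInv : g '' Me ⊆ Me)
    (hMiSub : Mi ⊆ Me) (hMiClosed : IsClosed Mi)
    (hMiStable : StableRel g Me Mi)
    (hMoSub : Mo ⊆ Mi) (hMoCompact : IsCompact Mo) (hMone : Mo.Nonempty)
    (hMoStable : StableRel g Mi Mo) (hMoAttr : GloballyAttractiveRel g Mi Mo)
    (hUGB : ∀ K : Set (EuclideanSpace ℝ (Fin d)), IsCompact K → K ⊆ Me →
      ∃ Δ > (0 : ℝ), ∀ x ∈ K, ∀ n : ℕ, ‖g^[n] x‖ < Δ) :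
    ∀ ε > (0:ℝ), ∃ δ > (0:ℝ), ∀ x ∈ Me, infDist x Mo < δ →
      ∀ n : ℕ, infDist (g^[n] x) Mo < ε := by
  have hMoClosed := hMoCompact.isClosed
  by_contra hcon
  push_neg at hcon
  obtain ⟨ε₀, hε₀, hbad⟩ := hcon
  -- a bad point at scale 1/(k+1)
  have hsel : ∀ k : ℕ, ∃ x ∈ Me, infDist x Mo < 1/(k+1) ∧
      ∃ n : ℕ, ε₀ ≤ infDist (g^[n] x) Mo := by
    intro k
    obtain ⟨x, hxMe, hxd, n, hn⟩ := hbad (1/(k+1)) (by positivity)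
    exact ⟨x, hxMe, hxd, n, hn⟩
  choose x hxMe hxd n hn using hsel
  -- pass to a subsequence converging to a point of Mo
  have hy : ∀ k : ℕ, ∃ y ∈ Mo, dist (x k) y < 1/(k+1) :=
    fun k => (infDist_lt_iff hMone).1 (hxd k)
  choose yy hyyMo hyyd using hy
  obtain ⟨xstar, hxstar, ψ, hψ, hψconv⟩ := hMoCompact.tendsto_subseq hyyMo
  have hxconv : Tendsto (fun j => x (ψ j)) atTop (𝓝 xstar) := by
    rw [tendsto_iff_dist_tendsto_zero]
    have h1 : Tendsto (fun j : ℕ => (1:ℝ)/(ψ j + 1) + dist (yy (ψ j)) xstar) atTop (𝓝 0) := by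
      have ha : Tendsto (fun j : ℕ => (1:ℝ)/(ψ j + 1)) atTop (𝓝 0) :=
        (tendsto_one_div_add_atTop_nhds_zero_nat.comp hψ.tendsto_atTop)
      have hb : Tendsto (fun j => dist (yy (ψ j)) xstar) atTop (𝓝 0) :=
        tendsto_iff_dist_tendsto_zero.1 hψconv
      simpa using ha.add hb
    refine squeeze_zero (fun j => dist_nonneg) (fun j => ?_) h1
    calc dist (x (ψ j)) xstar ≤ dist (x (ψ j)) (yy (ψ j)) + dist (yy (ψ j)) xstar :=
          dist_triangle _ _ _
      _ ≤ 1/(ψ j + 1) + dist (yy (ψ j)) xstar := by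
          have := (hyyd (ψ j)).le
          gcongr
  -- times go to infinity
  have hstarMo : ∀ m : ℕ, infDist (g^[m] xstar) Mo = 0 := fun m =>
    infDist_zero_of_mem (HKL.iter_mem_stable hMoSub hMoClosed hMoStable hxstar m)
  set N : ℕ → ℕ := fun j => n (ψ j) with hN
  have hNtop : Tendsto N atTop atTop := by
    rw [Filter.tendsto_atTop]
    intro b
    by_contra hb
    rw [not_eventually] at hb
    have hev : ∀ᶠ j in atTop, ∀ m ∈ Finset.range (b+1), infDist (g^[m] (x (ψ j))) Mo < ε₀ := by
      rw [eventually_all_finset]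
      intro m _
      have hc : Tendsto (fun j => infDist (g^[m] (x (ψ j))) Mo) atTop (𝓝 0) := by
        have := (((continuous_infDist_pt Mo).comp (hg.iterate m)).tendsto xstar).comp hxconv
        simpa [hstarMo m, Function.comp_def] using this
      exact hc.eventually (gt_mem_nhds hε₀)
    obtain ⟨j, hj1, hj2⟩ := (hb.and_eventually hev).exists
    have h1 := hj2 (N j) (Finset.mem_range.2 (by omega))
    have h2 := hn (ψ j)
    simp only [hN] at h1
    linarith
  -- uniform bound on trajectories
  obtain ⟨R₀, hR₀⟩ := hMoCompact.isBounded.subset_closedBall 0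
  have hR₀nn : 0 ≤ R₀ := le_trans (norm_nonneg _)
    (by simpa [mem_closedBall_zero_iff] using hR₀ hMone.choose_spec)
  have hxbnd : ∀ k, ‖x k‖ ≤ R₀ + 1 := by
    intro k
    have h1 : dist (x k) (yy k) < 1 := (hyyd k).trans_le (by
      rw [div_le_one (by positivity)]; linarith [Nat.cast_nonneg (α := ℝ) k])
    have h2 : ‖yy k‖ ≤ R₀ := by simpa [mem_closedBall_zero_iff] using hR₀ (hyyMo k)
    calc ‖x k‖ = dist (x k) 0 := by simp
      _ ≤ dist (x k) (yy k) + dist (yy k) 0 := dist_triangle _ _ _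
      _ ≤ 1 + R₀ := by rw [dist_zero_right] at *; linarith
      _ = R₀ + 1 := by ring
  obtain ⟨Δ, hΔpos, hΔ⟩ := hUGB (Me ∩ closedBall 0 (R₀+1))
    ((isCompact_closedBall (0:EuclideanSpace ℝ (Fin d)) (R₀+1)).of_isClosed_subset
      (hMeClosed.inter isClosed_closedBall) Set.inter_subset_right) Set.inter_subset_left
  have hxK : ∀ k, x k ∈ Me ∩ closedBall 0 (R₀+1) :=
    fun k => ⟨hxMe k, by simpa [mem_closedBall_zero_iff] using hxbnd k⟩
  set C : Set (EuclideanSpace ℝ (Fin d)) := Me ∩ closedBall 0 Δ with hC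
  have hCc : IsCompact C :=
    (isCompact_closedBall (0:EuclideanSpace ℝ (Fin d)) Δ).of_isClosed_subset
      (hMeClosed.inter isClosed_closedBall) Set.inter_subset_right
  set ξ : ℕ → ℕ → EuclideanSpace ℝ (Fin d) := fun k m => g^[N k - m] (x (ψ k)) with hξ
  have hξC : ∀ k m, ξ k m ∈ C := fun k m =>
    ⟨HKL.iter_mem hMeInv (hxMe (ψ k)) _, by
      simpa [mem_closedBall_zero_iff] using (hΔ _ (hxK (ψ k)) (N k - m)).le⟩
  have hSc : IsCompact (Set.univ.pi fun _ : ℕ => C) := isCompact_univ_pi fun _ => hCc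
  have hle : Filter.map ξ atTop ≤ 𝓟 (Set.univ.pi fun _ : ℕ => C) := by
    rw [le_principal_iff, mem_map]
    filter_upwards with k
    exact fun m _ => hξC k m
  obtain ⟨y, hyS, hy⟩ := hSc.exists_clusterPt hle
  have hyc : ∀ m, g (y (m + 1)) = y m := by
    intro m
    have hcl : IsClosed {f : ℕ → EuclideanSpace ℝ (Fin d) | g (f (m+1)) = f m} :=
      isClosed_eq (hg.comp (continuous_apply (m+1))) (continuous_apply m)
    refine HKL.clusterPt_mem_closed hy hcl ?_
    rw [mem_map]
    filter_upwards [hNtop.eventually (eventually_ge_atTop (m+1))] with k hk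
    show g (g^[N k - (m+1)] (x (ψ k))) = g^[N k - m] (x (ψ k))
    rw [← Function.iterate_succ_apply' g]
    congr 1
    omega
  have hyMi : ∀ m, y m ∈ Mi := by
    intro m
    rw [hMiClosed.mem_iff_infDist_zero ⟨_, hMoSub hxstar⟩]
    refine le_antisymm (le_of_forall_pos_le_add fun η hη => ?_) infDist_nonneg
    obtain ⟨δη, hδηpos, hδη⟩ := hMiStable η hη (R₀ + 2) (by linarith)
    have hcl : IsClosed {f : ℕ → EuclideanSpace ℝ (Fin d) | infDist (f m) Mi ≤ η} :=
      isClosed_le ((continuous_infDist_pt Mi).comp (continuous_apply m)) continuous_const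
    have hmem : y ∈ {f : ℕ → EuclideanSpace ℝ (Fin d) | infDist (f m) Mi ≤ η} := by
      refine HKL.clusterPt_mem_closed hy hcl ?_
      rw [mem_map]
      have hsmall : ∀ᶠ k : ℕ in atTop, (1:ℝ)/(ψ k + 1) < δη := by
        have : Tendsto (fun k : ℕ => (1:ℝ)/(ψ k + 1)) atTop (𝓝 0) :=
          tendsto_one_div_add_atTop_nhds_zero_nat.comp hψ.tendsto_atTop
        exact this.eventually (gt_mem_nhds hδηpos)
      filter_upwards [hsmall] with k hk
      have hdMi : infDist (x (ψ k)) Mi < δη :=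
        lt_of_le_of_lt (infDist_le_infDist_of_subset hMoSub hMone) ((hxd (ψ k)).trans hk)
      show infDist (g^[N k - m] (x (ψ k))) Mi ≤ η
      exact (hδη _ (hxMe (ψ k)) hdMi (by have := hxbnd (ψ k); linarith) (N k - m)).le
    simpa using hmem
  have hy0 : ε₀ ≤ infDist (y 0) Mo := by
    have hcl : IsClosed {f : ℕ → EuclideanSpace ℝ (Fin d) | ε₀ ≤ infDist (f 0) Mo} :=
      isClosed_le continuous_const ((continuous_infDist_pt Mo).comp (continuous_apply 0))
    refine HKL.clusterPt_mem_closed hy hcl ?_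
    rw [mem_map]
    filter_upwards with k
    show ε₀ ≤ infDist (g^[N k - 0] (x (ψ k))) Mo
    simpa [hN] using hn (ψ k)
  have hyR : ∀ m, ‖y m‖ ≤ Δ := by
    intro m
    have := hyS m (Set.mem_univ m)
    simpa [mem_closedBall_zero_iff] using this.2
  have hy0Mo : y 0 ∈ Mo := HKL.backOrbit hg hMiSub hMiClosed hMiStable hMoSub hMoClosed hMone
    hMoStable hMoAttr hUGB Δ y hyc hyMi hyR
  have : infDist (y 0) Mo = 0 := infDist_zero_of_mem hy0Mo
  linarith

/-- Uniform attractivity on compact subsets of `Me`. -/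
lemma HKL.unif_attr (hMeInv : g '' Me ⊆ Me)
    (hstab : ∀ ε > (0:ℝ), ∃ δ > (0:ℝ), ∀ x ∈ Me, infDist x Mo < δ →
      ∀ n : ℕ, infDist (g^[n] x) Mo < ε)
    (hattr : ∀ x ∈ Me, Tendsto (fun n : ℕ => infDist (g^[n] x) Mo) atTop (𝓝 0))
    (hgc : ∀ m : ℕ, Continuous fun z => infDist (g^[m] z) Mo)
    {K : Set (EuclideanSpace ℝ (Fin d))} (hKc : IsCompact K) (hKsub : K ⊆ Me)
    {ε : ℝ} (hε : 0 < ε) :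
    ∃ N : ℕ, ∀ x ∈ K, ∀ n ≥ N, infDist (g^[n] x) Mo < ε := by
  obtain ⟨δ, hδpos, hδ⟩ := hstab ε hε
  have hNx : ∀ x : K, ∃ N : ℕ, infDist (g^[N] (x:EuclideanSpace ℝ (Fin d))) Mo < δ := by
    intro x
    exact ((hattr x (hKsub x.2)).eventually (gt_mem_nhds hδpos)).exists
  choose Nf hNf using hNx
  set U : K → Set (EuclideanSpace ℝ (Fin d)) := fun i => {z | infDist (g^[Nf i] z) Mo < δ}
    with hU
  have hUopen : ∀ i, IsOpen (U i) := fun i => isOpen_lt (hgc (Nf i)) continuous_const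
  have hcover : K ⊆ ⋃ i, U i := fun z hz => Set.mem_iUnion.2 ⟨⟨z, hz⟩, hNf ⟨z, hz⟩⟩
  obtain ⟨t, ht⟩ := hKc.elim_finite_subcover U hUopen hcover
  refine ⟨t.sup Nf, fun x hx n hn => ?_⟩
  obtain ⟨i, hit, hxi⟩ := Set.mem_iUnion₂.1 (ht hx)
  have hNi : Nf i ≤ n := le_trans (Finset.le_sup hit) hn
  have hmem : g^[Nf i] x ∈ Me := HKL.iter_mem hMeInv (hKsub hx) _
  have := hδ _ hmem hxi (n - Nf i)
  rwa [← Function.iterate_add_apply, Nat.sub_add_cancel hNi] at this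
end Aux

theorem hierarchical_KL_bound_discrete {d : ℕ}
    (g : EuclideanSpace ℝ (Fin d) → EuclideanSpace ℝ (Fin d)) (hg : Continuous g)
    (Me Mi Mo : Set (EuclideanSpace ℝ (Fin d)))
    (hMeClosed : IsClosed Me) (hMeInv : g '' Me ⊆ Me)
    (hMiSub : Mi ⊆ Me) (hMiClosed : IsClosed Mi)
    (hMiStable : StableRel g Me Mi) (hMiAttr : GloballyAttractiveRel g Me Mi)
    (hMoSub : Mo ⊆ Mi) (hMoCompact : IsCompact Mo)
    (hMoStable : StableRel g Mi Mo) (hMoAttr : GloballyAttractiveRel g Mi Mo)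
    (hUGB : ∀ K : Set (EuclideanSpace ℝ (Fin d)), IsCompact K → K ⊆ Me →
      ∃ Δ > (0 : ℝ), ∀ x ∈ K, ∀ n : ℕ, ‖g^[n] x‖ < Δ) :
    ∃ β : ℝ → ℕ → ℝ,
      (∀ s ∈ Set.Ici (0 : ℝ), ∀ n : ℕ, 0 ≤ β s n) ∧
      (∀ n : ℕ, ContinuousOn (fun s => β s n) (Set.Ici (0 : ℝ))) ∧
      (∀ n : ℕ, StrictMonoOn (fun s => β s n) (Set.Ici (0 : ℝ))) ∧
      (∀ n : ℕ, β 0 n = 0) ∧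
      (∀ s ∈ Set.Ici (0 : ℝ), ∀ m n : ℕ, m ≤ n → β s n ≤ β s m) ∧
      (∀ s ∈ Set.Ici (0 : ℝ), Tendsto (fun n : ℕ => β s n) atTop (𝓝 0)) ∧
      (∀ x ∈ Me, ∀ n : ℕ, infDist (g^[n] x) Mo ≤ β (infDist x Mo) n) := by
  classical
  have htrivaux : Tendsto (fun n : ℕ => (1:ℝ) / (n + 1)) atTop (𝓝 0) :=
    tendsto_one_div_add_atTop_nhds_zero_nat
  rcases Mo.eq_empty_or_nonempty with hMo | hMone
  · -- trivial case : `Mo = ∅`, all distances to `Mo` are zero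
    subst hMo
    refine ⟨fun s n => s / (n + 1), ?_, ?_, ?_, ?_, ?_, ?_, ?_⟩
    · intro s hs n; have : (0:ℝ) ≤ s := hs; positivity
    · intro n; exact (continuous_id.div_const _).continuousOn
    · intro n a _ b _ hab
      have hpos : (0:ℝ) < (n:ℝ) + 1 := by positivity
      exact div_lt_div_of_pos_right hab hpos
    · intro n; simp
    · intro s hs m n hmn
      have hs' : (0:ℝ) ≤ s := hs
      exact div_le_div_of_nonneg_left hs' (by positivity) (by exact_mod_cast by omega)
    · intro s hs
      have : (fun n : ℕ => s / (n+1)) = fun n : ℕ => s * (1/(n+1)) := by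
        funext n; ring
      rw [this]
      simpa using (htrivaux.const_mul s)
    · intro x hx n
      simp [infDist_empty]
  · -- main case : Mo nonempty
    have hMoClosed := hMoCompact.isClosed
    have hstab := HKL.stab_Me hg hMeClosed hMeInv hMiSub hMiClosed hMiStable hMoSub
      hMoCompact hMone hMoStable hMoAttr hUGB
    have hattr : ∀ x ∈ Me, Tendsto (fun n : ℕ => infDist (g^[n] x) Mo) atTop (𝓝 0) :=
      fun x hx => HKL.attr_Me hg hMeClosed hMeInv hMiSub hMiClosed hMiStable hMiAttr hMoSub
        hMoClosed hMone hMoStable hMoAttr hUGB hx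
    have hgc : ∀ m : ℕ, Continuous fun z : EuclideanSpace ℝ (Fin d) => infDist (g^[m] z) Mo :=
      fun m => (continuous_infDist_pt Mo).comp (hg.iterate m)
    obtain ⟨R₀, hR₀⟩ := hMoCompact.isBounded.subset_closedBall 0
    have hR₀nn : 0 ≤ R₀ := le_trans (norm_nonneg _)
      (by simpa [mem_closedBall_zero_iff] using hR₀ hMone.choose_spec)
    set A : ℝ → ℕ → Set ℝ := fun s n =>
      (fun p : EuclideanSpace ℝ (Fin d) × ℕ => infDist (g^[p.2] p.1) Mo) ''
        {p | p.1 ∈ Me ∧ infDist p.1 Mo ≤ s ∧ n ≤ p.2} with hA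
    set W : ℝ → ℕ → ℝ := fun s n => sSup (A s n) with hW
    have hKcomp : ∀ s : ℝ, 0 ≤ s → IsCompact {z | z ∈ Me ∧ infDist z Mo ≤ s} := by
      intro s hs
      have hcl : IsClosed {z | z ∈ Me ∧ infDist z Mo ≤ s} :=
        hMeClosed.inter (isClosed_le (continuous_infDist_pt Mo) continuous_const)
      refine (isCompact_closedBall (0:EuclideanSpace ℝ (Fin d)) (R₀ + s + 1)).of_isClosed_subset
        hcl ?_
      rintro z ⟨hzMe, hzd⟩
      obtain ⟨y, hyMo, hyd⟩ := (infDist_lt_iff hMone).1 (lt_of_le_of_lt hzd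
        (by linarith : s < s + 1))
      have hy : ‖y‖ ≤ R₀ := by simpa [mem_closedBall_zero_iff] using hR₀ hyMo
      rw [mem_closedBall_zero_iff]
      calc ‖z‖ = dist z 0 := by simp
        _ ≤ dist z y + dist y 0 := dist_triangle _ _ _
        _ ≤ (s + 1) + R₀ := by rw [dist_zero_right]; linarith
        _ = R₀ + s + 1 := by ring
    have hAneg : ∀ s : ℝ, s < 0 → ∀ n, A s n = ∅ := by
      intro s hs n
      ext r
      simp only [hA, Set.mem_image, Set.mem_setOf_eq, Set.mem_empty_iff_false, iff_false]
      rintro ⟨p, ⟨-, hp, -⟩, -⟩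
      exact absurd (le_trans infDist_nonneg hp) (not_le.2 hs)
    have hbddA : ∀ s n, BddAbove (A s n) := by
      intro s n
      rcases lt_or_ge s 0 with hs | hs
      · rw [hAneg s hs n]; exact bddAbove_empty
      · obtain ⟨Δ, hΔpos, hΔ⟩ := hUGB _ (hKcomp s hs) (fun z hz => hz.1)
        refine ⟨Δ + R₀, ?_⟩
        rw [hA]
        rintro r ⟨p, ⟨hp1, hp2, -⟩, rfl⟩
        have h1 : ‖g^[p.2] p.1‖ < Δ := hΔ p.1 ⟨hp1, hp2⟩ p.2
        have h2 : ‖(hMone.choose)‖ ≤ R₀ := by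
          simpa [mem_closedBall_zero_iff] using hR₀ hMone.choose_spec
        calc infDist (g^[p.2] p.1) Mo ≤ dist (g^[p.2] p.1) hMone.choose :=
              infDist_le_dist_of_mem hMone.choose_spec
          _ ≤ ‖g^[p.2] p.1‖ + ‖hMone.choose‖ := by
              rw [dist_eq_norm]; exact norm_sub_le _ _
          _ ≤ Δ + R₀ := by linarith
    have hA0 : ∀ s : ℝ, 0 ≤ s → ∀ n, (0:ℝ) ∈ A s n := by
      intro s hs n
      rw [hA]
      refine ⟨(hMone.choose, n), ⟨hMiSub (hMoSub hMone.choose_spec),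
        by simpa [infDist_zero_of_mem hMone.choose_spec] using hs, le_refl n⟩, ?_⟩
      simp [infDist_zero_of_mem
        (HKL.iter_mem_stable hMoSub hMoClosed hMoStable hMone.choose_spec n)]
    have hWnn : ∀ s : ℝ, 0 ≤ s → ∀ n, 0 ≤ W s n := fun s hs n =>
      le_csSup (hbddA s n) (hA0 s hs n)
    have hWmono : ∀ n, Monotone fun s => W s n := by
      intro n s s' hss'
      show W s n ≤ W s' n
      rcases lt_or_ge s 0 with hs | hs
      · rw [hW]
        simp only
        rw [hAneg s hs n, Real.sSup_empty]
        rcases lt_or_ge s' 0 with hs' | hs'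
        · rw [hAneg s' hs' n, Real.sSup_empty]
        · exact hWnn s' hs' n
      · refine csSup_le_csSup (hbddA s' n) ⟨0, hA0 s hs n⟩ ?_
        rw [hA]
        rintro r ⟨p, ⟨hp1, hp2, hp3⟩, rfl⟩
        exact ⟨p, ⟨hp1, hp2.trans hss', hp3⟩, rfl⟩
    have hWanti : ∀ s : ℝ, 0 ≤ s → ∀ m n : ℕ, m ≤ n → W s n ≤ W s m := by
      intro s hs m n hmn
      refine csSup_le_csSup (hbddA s m) ⟨0, hA0 s hs n⟩ ?_
      rw [hA]
      rintro r ⟨p, ⟨hp1, hp2, hp3⟩, rfl⟩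
      exact ⟨p, ⟨hp1, hp2, hmn.trans hp3⟩, rfl⟩
    have hWmem : ∀ x ∈ Me, ∀ n : ℕ, infDist (g^[n] x) Mo ≤ W (infDist x Mo) n := by
      intro x hx n
      refine le_csSup (hbddA _ n) ?_
      rw [hA]
      exact ⟨(x, n), ⟨hx, le_refl _, le_refl n⟩, rfl⟩
    have hWtend : ∀ s : ℝ, 0 ≤ s → Tendsto (fun n => W s n) atTop (𝓝 0) := by
      intro s hs
      rw [Metric.tendsto_atTop]
      intro ε hε
      obtain ⟨N, hN⟩ := HKL.unif_attr hMeInv hstab hattr hgc (hKcomp s hs)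
        (fun z hz => hz.1) (half_pos hε)
      refine ⟨N, fun n hn => ?_⟩
      have hle : W s n ≤ ε/2 := by
        refine Real.sSup_le ?_ (half_pos hε).le
        rw [hA]
        rintro r ⟨p, ⟨hp1, hp2, hp3⟩, rfl⟩
        exact (hN p.1 ⟨hp1, hp2⟩ p.2 (hn.trans hp3)).le
      rw [Real.dist_eq, sub_zero, abs_of_nonneg (hWnn s hs n)]
      linarith
    have hWsmall : ∀ ε : ℝ, 0 < ε → ∃ δ > (0:ℝ), ∀ σ : ℝ, σ < δ → ∀ n, W σ n ≤ ε := by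
      intro ε hε
      obtain ⟨δ, hδpos, hδ⟩ := hstab ε hε
      refine ⟨δ, hδpos, fun σ hσ n => ?_⟩
      refine Real.sSup_le ?_ hε.le
      rw [hA]
      rintro r ⟨p, ⟨hp1, hp2, -⟩, rfl⟩
      exact (hδ p.1 hp1 (lt_of_le_of_lt hp2 hσ) p.2).le
    have hW0 : ∀ n, W 0 n = 0 := by
      intro n
      refine le_antisymm (Real.sSup_le ?_ le_rfl) (hWnn 0 le_rfl n)
      rw [hA]
      rintro r ⟨p, ⟨hp1, hp2, -⟩, rfl⟩
      have hpMo : p.1 ∈ Mo := by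
        rw [hMoClosed.mem_iff_infDist_zero hMone]
        exact le_antisymm hp2 infDist_nonneg
      simp [infDist_zero_of_mem (HKL.iter_mem_stable hMoSub hMoClosed hMoStable hpMo p.2)]
    -- integral construction of the KL function
    have hint : ∀ (n : ℕ) (a b : ℝ),
        IntervalIntegrable (fun σ => W σ n) MeasureTheory.volume a b :=
      fun n a b => ((hWmono n).monotoneOn _).intervalIntegrable
    set G : ℕ → ℝ → ℝ := fun n r => ∫ σ in (0:ℝ)..r, W σ n with hG
    have hGcont : ∀ n, Continuous (G n) := fun n =>
      intervalIntegral.continuous_primitive (hint n) 0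
    have hGdiff : ∀ (n : ℕ) (s : ℝ), G n (2*s) - G n s = ∫ σ in s..(2*s), W σ n :=
      fun n s => intervalIntegral.integral_interval_sub_left (hint n 0 (2*s)) (hint n 0 s)
    set β : ℝ → ℕ → ℝ := fun s n => (G n (2*s) - G n s)/s + s/(n+1) with hβ
    have hβzero : ∀ n, β 0 n = 0 := by intro n; simp [hβ]
    have hβint_nonneg : ∀ (n : ℕ) (s : ℝ), 0 ≤ s → 0 ≤ G n (2*s) - G n s := by
      intro n s hs
      rw [hGdiff]
      refine intervalIntegral.integral_nonneg (by linarith) ?_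
      intro σ hσ
      exact hWnn σ (le_trans hs hσ.1) n
    have hβnn : ∀ s : ℝ, 0 ≤ s → ∀ n, 0 ≤ β s n := by
      intro s hs n
      have h1 : 0 ≤ (G n (2*s) - G n s)/s := div_nonneg (hβint_nonneg n s hs) hs
      have h2 : 0 ≤ s/((n:ℝ)+1) := by positivity
      rw [hβ]
      exact add_nonneg h1 h2
    have hIleW : ∀ (n : ℕ) (s : ℝ), 0 < s → (G n (2*s) - G n s)/s ≤ W (2*s) n := by
      intro n s hs
      rw [hGdiff, div_le_iff₀ hs]
      calc ∫ σ in s..(2*s), W σ n ≤ ∫ σ in s..(2*s), W (2*s) n :=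
            intervalIntegral.integral_mono_on (by linarith) (hint n s (2*s))
              intervalIntegrable_const (fun σ hσ => hWmono n hσ.2)
        _ = W (2*s) n * s := by
            rw [intervalIntegral.integral_const, smul_eq_mul]; ring
    have hWleI : ∀ (n : ℕ) (s : ℝ), 0 < s → W s n ≤ (G n (2*s) - G n s)/s := by
      intro n s hs
      rw [hGdiff, le_div_iff₀ hs]
      calc W s n * s = ∫ σ in s..(2*s), W s n := by
            rw [intervalIntegral.integral_const, smul_eq_mul]; ring
        _ ≤ ∫ σ in s..(2*s), W σ n := intervalIntegral.integral_mono_on (by linarith)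
            intervalIntegrable_const (hint n s (2*s)) (fun σ hσ => hWmono n hσ.1)
    have hImono : ∀ (n : ℕ) (a b : ℝ), 0 ≤ a → a ≤ b →
        (G n (2*a) - G n a)/a ≤ (G n (2*b) - G n b)/b := by
      intro n a b ha hab
      rcases eq_or_lt_of_le ha with heq | ha'
      · rw [← heq]
        simp only [mul_zero, sub_self, zero_div]
        exact div_nonneg (hβint_nonneg n b (le_trans ha hab)) (le_trans ha hab)
      · have hb' : 0 < b := lt_of_lt_of_le ha' hab
        have hrepr : ∀ c : ℝ, 0 < c →
            (G n (2*c) - G n c)/c = ∫ t in (1:ℝ)..2, W (t*c) n := by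
          intro c hc
          rw [intervalIntegral.integral_comp_mul_right (fun u => W u n) hc.ne', one_mul,
            smul_eq_mul, hGdiff n c, div_eq_inv_mul]
        rw [hrepr a ha', hrepr b hb']
        refine intervalIntegral.integral_mono_on (by norm_num) ?_ ?_ ?_
        · exact MonotoneOn.intervalIntegrable (fun t _ t' _ htt' =>
            hWmono n (mul_le_mul_of_nonneg_right htt' ha))
        · exact MonotoneOn.intervalIntegrable (fun t _ t' _ htt' =>
            hWmono n (mul_le_mul_of_nonneg_right htt' hb'.le))
        · intro t ht
          exact hWmono n (mul_le_mul_of_nonneg_left hab (by linarith [ht.1]))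
    have hβcont : ∀ n : ℕ, ContinuousOn (fun s => β s n) (Set.Ici (0:ℝ)) := by
      intro n a ha
      rcases eq_or_lt_of_le (Set.mem_Ici.1 ha) with heq | hapos
      · rw [← heq]
        rw [Metric.continuousWithinAt_iff]
        intro ε hε
        obtain ⟨δ₁, hδ₁pos, hδ₁⟩ := hWsmall (ε/4) (by linarith)
        refine ⟨min (δ₁/2) (ε/4), by positivity, ?_⟩
        intro s hs hsd
        have hs0 : (0:ℝ) ≤ s := hs
        rw [Real.dist_eq, sub_zero, abs_of_nonneg hs0] at hsd
        have h2s : W (2*s) n ≤ ε/4 := hδ₁ (2*s)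
          (by have := lt_of_lt_of_le hsd (min_le_left _ _); linarith) n
        have hsε : s < ε/4 := lt_of_lt_of_le hsd (min_le_right _ _)
        have hβle : β s n ≤ ε/4 + ε/4 := by
          rcases eq_or_lt_of_le hs0 with heq2 | hspos
          · rw [← heq2, hβzero]; linarith
          · have hI := hIleW n s hspos
            have h3 : s/((n:ℝ)+1) ≤ s := by
              apply div_le_self hs0
              have : (1:ℝ) ≤ (n:ℝ) + 1 := by
                have := Nat.cast_nonneg (α := ℝ) n; linarith
              linarith
            rw [hβ]
            linarith
        show dist (β s n) (β 0 n) < ε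
        rw [Real.dist_eq, hβzero, sub_zero, abs_of_nonneg (hβnn s hs0 n)]
        exact lt_of_le_of_lt hβle (by linarith)
      · refine ContinuousAt.continuousWithinAt ?_
        have h1 : ContinuousAt (fun s : ℝ => G n (2*s) - G n s) a :=
          (((hGcont n).comp (continuous_const.mul continuous_id)).sub (hGcont n)).continuousAt
        have h2 : ContinuousAt (fun s : ℝ => (G n (2*s) - G n s)/s) a :=
          h1.div continuousAt_id hapos.ne'
        exact h2.add (continuousAt_id.div_const _)
    have hβsm : ∀ n : ℕ, StrictMonoOn (fun s => β s n) (Set.Ici (0:ℝ)) := by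
      intro n a ha b hb hab
      have h1 := hImono n a b ha hab.le
      have h2 : a/((n:ℝ)+1) < b/((n:ℝ)+1) := div_lt_div_of_pos_right hab (by positivity)
      show β a n < β b n
      rw [hβ]
      simp only
      linarith
    have hβanti : ∀ s : ℝ, 0 ≤ s → ∀ m n' : ℕ, m ≤ n' → β s n' ≤ β s m := by
      intro s hs m n' hmn
      have h2 : s/((n':ℝ)+1) ≤ s/((m:ℝ)+1) :=
        div_le_div_of_nonneg_left hs (by positivity) (by exact_mod_cast by omega)
      rcases eq_or_lt_of_le hs with heq | hspos
      · rw [← heq, hβzero, hβzero]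
      · have h1 : G n' (2*s) - G n' s ≤ G m (2*s) - G m s := by
          rw [hGdiff, hGdiff]
          exact intervalIntegral.integral_mono_on (by linarith) (hint n' s (2*s))
            (hint m s (2*s)) (fun σ hσ => hWanti σ (le_trans hs hσ.1) m n' hmn)
        have h1' : (G n' (2*s) - G n' s)/s ≤ (G m (2*s) - G m s)/s := by gcongr
        rw [hβ]
        simp only
        linarith
    have hβtend : ∀ s : ℝ, 0 ≤ s → Tendsto (fun n : ℕ => β s n) atTop (𝓝 0) := by
      intro s hs
      rcases eq_or_lt_of_le hs with heq | hspos
      · rw [← heq]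
        simpa [hβzero] using (tendsto_const_nhds : Tendsto (fun _ : ℕ => (0:ℝ)) atTop (𝓝 0))
      · have hub : ∀ n : ℕ, β s n ≤ W (2*s) n + s * (1/((n:ℝ)+1)) := by
          intro n
          have e2 := hIleW n s hspos
          have e1 : s/((n:ℝ)+1) = s * (1/((n:ℝ)+1)) := by ring
          rw [hβ]
          simp only
          linarith
        have hlim : Tendsto (fun n : ℕ => W (2*s) n + s * (1/((n:ℝ)+1))) atTop (𝓝 0) := by
          have h1 := hWtend (2*s) (by linarith)
          have h2 := htrivaux.const_mul s
          simpa using h1.add h2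
        exact squeeze_zero (fun n => hβnn s hs n) hub hlim
    refine ⟨β, fun s hs n => hβnn s hs n, hβcont, hβsm, hβzero,
      fun s hs m n' h => hβanti s hs m n' h, fun s hs => hβtend s hs, ?_⟩
    intro x hx n
    have hs0 : 0 ≤ infDist x Mo := infDist_nonneg
    rcases eq_or_lt_of_le hs0 with heq | hspos
    · have hxMo : x ∈ Mo := by
        rw [hMoClosed.mem_iff_infDist_zero hMone]; exact heq.symm
      rw [← heq, hβzero]
      simp [infDist_zero_of_mem (HKL.iter_mem_stable hMoSub hMoClosed hMoStable hxMo n)]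
    · refine (hWmem x hx n).trans ((hWleI n _ hspos).trans ?_)
      rw [hβ]
      simp only
      exact le_add_of_nonneg_right (by positivity)
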